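/- (Hex Lemma) For every n ∈ ℕ and every 2-colouring c : V(H_n) → {red, blue} of the vertices of the triangulated grid H_n, the graph H_n contains a path on n vertices all of whose vertices receive the same colour. -/

import Mathlib

open SimpleGraph

/-- Two (unordered) pairs of vertices cross with respect to the strict order `lt`:
with `e = {v,w}`, `f = {x,y}`, `v ≺ w`, `x ≺ y`, they cross if
`v ≺ x ≺ w ≺ y` or `x ≺ v ≺ y ≺ w`. -/
def Cross {V : Type*} (lt : V → V → Prop) (e f : Sym2 V) : Prop :=
  ∃ v w x y : V, e = s(v, w) ∧ f = s(x, y) ∧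
    ((lt v x ∧ lt x w ∧ lt w y) ∨ (lt x v ∧ lt v y ∧ lt y w))

/-- Two (unordered) pairs of vertices nest with respect to the strict order `lt`:
with `e = {v,w}`, `f = {x,y}`, `v ≺ w`, `x ≺ y`, they nest if
`v ≺ x ≺ y ≺ w` or `x ≺ v ≺ w ≺ y`. -/
def Nest {V : Type*} (lt : V → V → Prop) (e f : Sym2 V) : Prop :=
  ∃ v w x y : V, e = s(v, w) ∧ f = s(x, y) ∧
    ((lt v x ∧ lt x y ∧ lt y w) ∨ (lt x v ∧ lt v w ∧ lt w y))

/-- `(lt, φ)` is a `k`-stack layout of `G`: `lt` is a linear (strict total) order on the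
vertices and no two edges with the same colour cross. -/
def IsStackLayout {V : Type*} {k : ℕ} (G : SimpleGraph V)
    (lt : V → V → Prop) (φ : Sym2 V → Fin k) : Prop :=
  IsStrictTotalOrder V lt ∧
    ∀ e ∈ G.edgeSet, ∀ f ∈ G.edgeSet, φ e = φ f → ¬ Cross lt e f

/-- `(lt, φ)` is a `k`-queue layout of `G`: `lt` is a linear (strict total) order on the
vertices and no two edges with the same colour nest. -/
def IsQueueLayout {V : Type*} {k : ℕ} (G : SimpleGraph V)
    (lt : V → V → Prop) (φ : Sym2 V → Fin k) : Prop :=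
  IsStrictTotalOrder V lt ∧
    ∀ e ∈ G.edgeSet, ∀ f ∈ G.edgeSet, φ e = φ f → ¬ Nest lt e f

/-- The stack-number of `G`: the least `k` such that `G` has a `k`-stack layout. -/
noncomputable def stackNumber {V : Type*} (G : SimpleGraph V) : ℕ :=
  sInf {k | ∃ (lt : V → V → Prop) (φ : Sym2 V → Fin k), IsStackLayout G lt φ}

/-- The queue-number of `G`: the least `k` such that `G` has a `k`-queue layout. -/
noncomputable def queueNumber {V : Type*} (G : SimpleGraph V) : ℕ :=
  sInf {k | ∃ (lt : V → V → Prop) (φ : Sym2 V → Fin k), IsQueueLayout G lt φ}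

/-- A queue layout is strict if for every vertex `u` and neighbours `v, w` of `u` with
`u ≺ v ≺ w` or `v ≺ w ≺ u`, the edges `uv` and `uw` get different colours. -/
def IsStrictQueueLayout {V : Type*} {k : ℕ} (G : SimpleGraph V)
    (lt : V → V → Prop) (φ : Sym2 V → Fin k) : Prop :=
  IsQueueLayout G lt φ ∧
    ∀ u v w : V, G.Adj u v → G.Adj u w →
      ((lt u v ∧ lt v w) ∨ (lt v w ∧ lt w u)) → φ s(u, v) ≠ φ s(u, w)

/-- The strict queue-number of `G`. -/
noncomputable def strictQueueNumber {V : Type*} (G : SimpleGraph V) : ℕ :=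
  sInf {k | ∃ (lt : V → V → Prop) (φ : Sym2 V → Fin k), IsStrictQueueLayout G lt φ}

/-- A stack layout is dispersable if the colouring is a proper edge-colouring. -/
def IsDispersableStackLayout {V : Type*} {k : ℕ} (G : SimpleGraph V)
    (lt : V → V → Prop) (φ : Sym2 V → Fin k) : Prop :=
  IsStackLayout G lt φ ∧
    ∀ u v w : V, G.Adj u v → G.Adj u w → v ≠ w → φ s(u, v) ≠ φ s(u, w)

/-- The dispersable stack-number of `G`. -/
noncomputable def dispersableStackNumber {V : Type*} (G : SimpleGraph V) : ℕ :=
  sInf {k | ∃ (lt : V → V → Prop) (φ : Sym2 V → Fin k), IsDispersableStackLayout G lt φ}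

/-- The star `S_b` with root `none` and leaves `some i`, `i : Fin b`. -/
def starGraph (b : ℕ) : SimpleGraph (Option (Fin b)) :=
  SimpleGraph.fromRel (fun v w => v = none ∧ w ≠ none)

/-- The triangulated grid `H_n` on vertex set `Fin n × Fin n` (0-indexed), with horizontal
edges `(x,y)(x+1,y)`, vertical edges `(x,y)(x,y+1)` and diagonal edges `(x,y)(x+1,y+1)`. -/
def triGrid (n : ℕ) : SimpleGraph (Fin n × Fin n) :=
  SimpleGraph.fromRel (fun p q =>
    ((p.1 : ℕ) + 1 = (q.1 : ℕ) ∧ p.2 = q.2) ∨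
    (p.1 = q.1 ∧ (p.2 : ℕ) + 1 = (q.2 : ℕ)) ∨
    ((p.1 : ℕ) + 1 = (q.1 : ℕ) ∧ (p.2 : ℕ) + 1 = (q.2 : ℕ)))

namespace Hex8

def gadj (p q : ℕ × ℕ) : Prop :=
  (p.1 + 1 = q.1 ∧ p.2 = q.2) ∨ (p.1 = q.1 ∧ p.2 + 1 = q.2) ∨
  (p.1 + 1 = q.1 ∧ p.2 + 1 = q.2) ∨
  (q.1 + 1 = p.1 ∧ q.2 = p.2) ∨ (q.1 = p.1 ∧ q.2 + 1 = p.2) ∨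
  (q.1 + 1 = p.1 ∧ q.2 + 1 = p.2)

def maj (a b c : Bool) : Bool := (a && b) || (a && c) || (b && c)

def C' (C : ℕ × ℕ → Bool) (u : ℕ × ℕ) : Bool :=
  maj (C u) (C (u.1, u.2 + 1)) (C (u.1 + 1, u.2 + 1))

def lifts (u : ℕ × ℕ) : List (ℕ × ℕ) := [u, (u.1, u.2 + 1), (u.1 + 1, u.2 + 1)]

lemma maj_spec (a b c v : Bool) (h : maj a b c = v) :
    (a = v ∧ b = v) ∨ (a = v ∧ c = v) ∨ (b = v ∧ c = v) := by
  cases a <;> cases b <;> cases c <;> cases v <;> simp_all [maj]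

lemma cross3 {C : ℕ × ℕ → Bool} {b : Bool} {u v : ℕ × ℕ}
    (hcu : C' C u = b) (hcv : C' C v = b)
    (h : (u.1 + 1 = v.1 ∧ u.2 = v.2) ∨ (u.1 = v.1 ∧ u.2 + 1 = v.2) ∨
      (u.1 + 1 = v.1 ∧ u.2 + 1 = v.2)) :
    ∃ l ∈ lifts u, ∃ l' ∈ lifts v, C l = b ∧ C l' = b ∧ (l = l' ∨ gadj l l') := by
  obtain ⟨x, y⟩ := u
  obtain ⟨x', y'⟩ := v
  simp only [Prod.mk.injEq] at h ⊢
  have hu := maj_spec _ _ _ _ hcu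
  have hv := maj_spec _ _ _ _ hcv
  simp only [C'] at hu hv
  rcases h with ⟨h1, h2⟩ | ⟨h1, h2⟩ | ⟨h1, h2⟩
  · -- horizontal : v = (x+1, y)
    subst h2; subst h1
    by_cases hs : C (x + 1, y + 1) = b
    · exact ⟨(x + 1, y + 1), by simp [lifts], (x + 1, y + 1), by simp [lifts], hs, hs, Or.inl rfl⟩
    · simp only [hs, and_false, false_and, or_false] at hu
      have hv' : C (x + 1, y) = b ∧ C (x + 1 + 1, y + 1) = b := by
        rcases hv with ⟨h3, h4⟩ | ⟨h3, h4⟩ | ⟨h3, h4⟩ <;> simp_all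
      exact ⟨(x, y), by simp [lifts], (x + 1, y), by simp [lifts], hu.1, hv'.1,
        Or.inr (by unfold gadj; simp)⟩
  · -- vertical : v = (x, y+1)
    subst h2; subst h1
    by_cases hs : C (x, y + 1) = b
    · exact ⟨(x, y + 1), by simp [lifts], (x, y + 1), by simp [lifts], hs, hs, Or.inl rfl⟩
    · have hu' : C (x, y) = b ∧ C (x + 1, y + 1) = b := by
        rcases hu with ⟨h3, h4⟩ | ⟨h3, h4⟩ | ⟨h3, h4⟩ <;> simp_all
      have hv' : C (x, y + 1 + 1) = b ∧ C (x + 1, y + 1 + 1) = b := by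
        rcases hv with ⟨h3, h4⟩ | ⟨h3, h4⟩ | ⟨h3, h4⟩ <;> simp_all
      exact ⟨(x + 1, y + 1), by simp [lifts], (x + 1, y + 1 + 1), by simp [lifts],
        hu'.2, hv'.2, Or.inr (by unfold gadj; simp)⟩
  · -- diagonal : v = (x+1, y+1)
    subst h2; subst h1
    by_cases hs : C (x + 1, y + 1) = b
    · exact ⟨(x + 1, y + 1), by simp [lifts], (x + 1, y + 1), by simp [lifts], hs, hs, Or.inl rfl⟩
    · have hu' : C (x, y) = b ∧ C (x, y + 1) = b := by
        rcases hu with ⟨h3, h4⟩ | ⟨h3, h4⟩ | ⟨h3, h4⟩ <;> simp_all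
      have hv' : C (x + 1, y + 1 + 1) = b ∧ C (x + 1 + 1, y + 1 + 1) = b := by
        rcases hv with ⟨h3, h4⟩ | ⟨h3, h4⟩ | ⟨h3, h4⟩ <;> simp_all
      exact ⟨(x, y + 1), by simp [lifts], (x + 1, y + 1 + 1), by simp [lifts],
        hu'.2, hv'.1, Or.inr (by unfold gadj; simp)⟩

lemma cross {C : ℕ × ℕ → Bool} {b : Bool} {u v : ℕ × ℕ}
    (hcu : C' C u = b) (hcv : C' C v = b) (h : gadj u v) :
    ∃ l ∈ lifts u, ∃ l' ∈ lifts v, C l = b ∧ C l' = b ∧ (l = l' ∨ gadj l l') := by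
  unfold gadj at h
  rcases h with h | h | h | h | h | h
  · exact cross3 hcu hcv (Or.inl h)
  · exact cross3 hcu hcv (Or.inr (Or.inl h))
  · exact cross3 hcu hcv (Or.inr (Or.inr h))
  all_goals {
    obtain ⟨l', hl', l, hl, hb', hb, he⟩ := cross3 hcv hcu (by tauto)
    refine ⟨l, hl, l', hl', hb, hb', ?_⟩
    rcases he with he | he
    · exact Or.inl he.symm
    · right; unfold gadj at he ⊢; tauto }

def inT (m : ℕ) (p : ℕ × ℕ) : Prop := p.1 ≤ p.2 ∧ p.2 < m

def good (m : ℕ) (b : Bool) (C : ℕ × ℕ → Bool) (p : ℕ × ℕ) : Prop :=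
  inT m p ∧ C p = b

def Reach (m : ℕ) (b : Bool) (C : ℕ × ℕ → Bool) : ℕ × ℕ → ℕ × ℕ → Prop :=
  Relation.ReflTransGen (fun u v => gadj u v ∧ good m b C v)

lemma lifts_inT {m : ℕ} {u : ℕ × ℕ} (h : inT (m + 1) u) :
    ∀ l ∈ lifts u, inT (m + 2) l := by
  obtain ⟨h1, h2⟩ := h
  intro l hl
  simp only [lifts, List.mem_cons, List.mem_singleton] at hl
  rcases hl with rfl | rfl | rfl | h
  · exact ⟨h1, by omega⟩
  · exact ⟨by simp; omega, by simp; omega⟩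
  · exact ⟨by simp; omega, by simp; omega⟩
  · simp at h

lemma lifts_adj {u : ℕ × ℕ} : ∀ l ∈ lifts u, ∀ l' ∈ lifts u, l = l' ∨ gadj l l' := by
  intro l hl l' hl'
  simp only [lifts, List.mem_cons, List.mem_singleton] at hl hl'
  rcases hl with rfl | rfl | rfl | h <;> [skip; skip; skip; simp at h] <;>
  · rcases hl' with rfl | rfl | rfl | h' <;> [skip; skip; skip; simp at h'] <;>
      first
        | (left; rfl)
        | (right; unfold gadj; simp)

/-- lifting reachability from the reduced board to the full board -/
lemma lift_reach {m : ℕ} {b : Bool} {C : ℕ × ℕ → Bool} {u v : ℕ × ℕ}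
    (h : Reach (m + 1) b (C' C) u v) (hu : good (m + 1) b (C' C) u) :
    good (m + 1) b (C' C) v ∧
      ∀ l ∈ lifts u, C l = b → ∀ l' ∈ lifts v, C l' = b → Reach (m + 2) b C l l' := by
  induction h with
  | refl =>
      refine ⟨hu, fun l hl hlb l' hl' hlb' => ?_⟩
      rcases lifts_adj l hl l' hl' with rfl | ha
      · exact Relation.ReflTransGen.refl
      · exact Relation.ReflTransGen.single ⟨ha, lifts_inT hu.1 l' hl', hlb'⟩
  | @tail w v h' st ih =>
      obtain ⟨hw, ihr⟩ := ih
      refine ⟨st.2, fun l hl hlb l' hl' hlb' => ?_⟩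
      obtain ⟨lw, hlw, lv, hlv, hlwb, hlvb, he⟩ := cross hw.2 st.2.2 st.1
      have r1 : Reach (m + 2) b C l lw := ihr l hl hlb lw hlw hlwb
      have r2 : Reach (m + 2) b C lw lv := by
        rcases he with rfl | ha
        · exact Relation.ReflTransGen.refl
        · exact Relation.ReflTransGen.single ⟨ha, lifts_inT st.2.1 lv hlv, hlvb⟩
      have r3 : Reach (m + 2) b C lv l' := by
        rcases lifts_adj lv hlv l' hl' with rfl | ha
        · exact Relation.ReflTransGen.refl
        · exact Relation.ReflTransGen.single ⟨ha, lifts_inT st.2.1 l' hl', hlb'⟩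
      exact (r1.trans r2).trans r3

lemma exists_lift_left {C : ℕ × ℕ → Bool} {b : Bool} {u : ℕ × ℕ}
    (hc : C' C u = b) (h0 : u.1 = 0) : ∃ l ∈ lifts u, C l = b ∧ l.1 = 0 := by
  rcases maj_spec _ _ _ _ hc with ⟨h1, h2⟩ | ⟨h1, h2⟩ | ⟨h1, h2⟩
  · exact ⟨u, by simp [lifts], h1, h0⟩
  · exact ⟨u, by simp [lifts], h1, h0⟩
  · exact ⟨(u.1, u.2 + 1), by simp [lifts], h1, h0⟩

lemma exists_lift_top {C : ℕ × ℕ → Bool} {b : Bool} {u : ℕ × ℕ} {m : ℕ}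
    (hc : C' C u = b) (ht : u.2 = m) : ∃ l ∈ lifts u, C l = b ∧ l.2 = m + 1 := by
  rcases maj_spec _ _ _ _ hc with ⟨h1, h2⟩ | ⟨h1, h2⟩ | ⟨h1, h2⟩
  · exact ⟨(u.1, u.2 + 1), by simp [lifts], h2, by simp [ht]⟩
  · exact ⟨(u.1 + 1, u.2 + 1), by simp [lifts], h2, by simp [ht]⟩
  · exact ⟨(u.1, u.2 + 1), by simp [lifts], h1, by simp [ht]⟩

lemma exists_lift_diag {C : ℕ × ℕ → Bool} {b : Bool} {u : ℕ × ℕ}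
    (hc : C' C u = b) (hd : u.1 = u.2) : ∃ l ∈ lifts u, C l = b ∧ l.1 = l.2 := by
  rcases maj_spec _ _ _ _ hc with ⟨h1, h2⟩ | ⟨h1, h2⟩ | ⟨h1, h2⟩
  · exact ⟨u, by simp [lifts], h1, hd⟩
  · exact ⟨u, by simp [lifts], h1, hd⟩
  · exact ⟨(u.1 + 1, u.2 + 1), by simp [lifts], h2, by simp [hd]⟩

/-- The Y theorem: some colour class connects all three sides of the triangular board. -/
theorem ytheorem : ∀ (m : ℕ) (C : ℕ × ℕ → Bool),
    ∃ (b : Bool) (p q r : ℕ × ℕ),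
      good (m + 1) b C p ∧ good (m + 1) b C q ∧ good (m + 1) b C r ∧
      p.1 = 0 ∧ q.2 = m ∧ r.1 = r.2 ∧
      Reach (m + 1) b C p q ∧ Reach (m + 1) b C q r := by
  intro m
  induction m with
  | zero =>
      intro C
      exact ⟨C (0, 0), (0, 0), (0, 0), (0, 0),
        ⟨⟨le_refl 0, Nat.zero_lt_one⟩, rfl⟩, ⟨⟨le_refl 0, Nat.zero_lt_one⟩, rfl⟩,
        ⟨⟨le_refl 0, Nat.zero_lt_one⟩, rfl⟩, rfl, rfl, rfl,
        Relation.ReflTransGen.refl, Relation.ReflTransGen.refl⟩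
  | succ m ih =>
      intro C
      obtain ⟨b, p', q', r', hp, hq, hr, hp0, hqt, hrd, hpq, hqr⟩ := ih (C' C)
      obtain ⟨lp, hlp, hlpb, hlp0⟩ := exists_lift_left hp.2 hp0
      obtain ⟨lq, hlq, hlqb, hlqt⟩ := exists_lift_top hq.2 hqt
      obtain ⟨lr, hlr, hlrb, hlrd⟩ := exists_lift_diag hr.2 hrd
      refine ⟨b, lp, lq, lr,
        ⟨lifts_inT hp.1 lp hlp, hlpb⟩, ⟨lifts_inT hq.1 lq hlq, hlqb⟩,
        ⟨lifts_inT hr.1 lr hlr, hlrb⟩, hlp0, hlqt, hlrd, ?_, ?_⟩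
      · exact (lift_reach hpq hp).2 lp hlp hlpb lq hlq hlqb
      · exact (lift_reach hqr hq).2 lq hlq hlqb lr hlr hlrb

lemma gadj_symm {p q : ℕ × ℕ} (h : gadj p q) : gadj q p := by unfold gadj at *; tauto
lemma gadj_irrefl (p : ℕ × ℕ) : ¬ gadj p p := by unfold gadj; omega

/-- truncation of a descending chain at the first time it hits level `B` -/
lemma trunc {α : Type*} (R : α → α → Prop) (f : α → ℕ)
    (hL : ∀ a c, R a c → f a ≤ f c + 1) (B : ℕ) :
    ∀ (l : List α) (u : α), List.Chain R u l → B < f u →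
      f ((u :: l).getLast (List.cons_ne_nil _ _)) ≤ B →
      ∃ l', List.Chain R u l' ∧ List.Sublist (u :: l') (u :: l) ∧ (∀ x ∈ u :: l', B ≤ f x) ∧
        f ((u :: l').getLast (List.cons_ne_nil _ _)) = B := by
  intro l
  induction l with
  | nil =>
      intro u _ h1 h2
      simp only [List.getLast_singleton] at h2
      omega
  | cons v t ih =>
      intro u hch h1 h2
      rw [List.Chain, List.chain_cons] at hch
      obtain ⟨huv, hvt⟩ := hch
      have hlip := hL u v huv
      rw [List.getLast_cons_cons] at h2
      rcases le_or_gt (f v) B with hv | hv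
      · have hfv : f v = B := by omega
        refine ⟨[v], List.chain_cons.mpr ⟨huv, List.Chain.nil⟩, ?_, ?_, ?_⟩
        · exact (List.cons_sublist_cons).mpr ((List.cons_sublist_cons).mpr (List.nil_sublist t))
        · intro x hx
          rcases List.mem_cons.mp hx with rfl | hx
          · omega
          · simp only [List.mem_singleton] at hx; subst hx; omega
        · rw [List.getLast_cons_cons, List.getLast_singleton]; exact hfv
      · obtain ⟨t', ht1, ht2, ht3, ht4⟩ := ih v hvt hv h2
        refine ⟨v :: t', List.chain_cons.mpr ⟨huv, ht1⟩, ?_, ?_, ?_⟩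
        · exact (List.cons_sublist_cons).mpr ht2
        · intro x hx
          rcases List.mem_cons.mp hx with rfl | hx
          · omega
          · exact ht3 x hx
        · rw [List.getLast_cons_cons]; exact ht4

/-- discrete intermediate value property along a chain -/
lemma ivt {α : Type*} (R : α → α → Prop) (f : α → ℕ)
    (hL : ∀ a c, R a c → f a ≤ f c + 1) :
    ∀ (l : List α) (u : α), List.Chain R u l → ∀ ℓ : ℕ,
      f ((u :: l).getLast (List.cons_ne_nil _ _)) ≤ ℓ → ℓ ≤ f u →
      ∃ x ∈ u :: l, f x = ℓ := by
  intro l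
  induction l with
  | nil =>
      intro u _ ℓ h1 h2
      simp only [List.getLast_singleton] at h1
      exact ⟨u, by simp, by omega⟩
  | cons v t ih =>
      intro u hch ℓ h1 h2
      rw [List.Chain, List.chain_cons] at hch
      rw [List.getLast_cons_cons] at h1
      by_cases he : f u = ℓ
      · exact ⟨u, by simp, he⟩
      · have hlip := hL u v hch.1
        obtain ⟨x, hx, hfx⟩ := ih v hch.2 ℓ h1 (by omega)
        exact ⟨x, List.mem_cons_of_mem _ hx, hfx⟩

def GG (m : ℕ) (b : Bool) (C : ℕ × ℕ → Bool) : SimpleGraph (ℕ × ℕ) where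
  Adj u v := gadj u v ∧ good m b C u ∧ good m b C v
  symm := ⟨fun u v ⟨h, hu, hv⟩ => ⟨gadj_symm h, hv, hu⟩⟩
  loopless := ⟨fun u ⟨h, _⟩ => gadj_irrefl u h⟩

lemma reach_rtg {m : ℕ} {b : Bool} {C : ℕ × ℕ → Bool} {u v : ℕ × ℕ}
    (hu : good m b C u) (h : Reach m b C u v) :
    good m b C v ∧ Relation.ReflTransGen (GG m b C).Adj u v := by
  induction h with
  | refl => exact ⟨hu, Relation.ReflTransGen.refl⟩
  | tail h' st ih => exact ⟨st.2, ih.2.tail (show gadj _ _ ∧ good m b C _ ∧ good m b C _ from ⟨st.1, ih.1, st.2⟩)⟩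

lemma support_good {m : ℕ} {b : Bool} {C : ℕ × ℕ → Bool} {a d : ℕ × ℕ}
    (W : (GG m b C).Walk a d) (ha : good m b C a) : ∀ x ∈ W.support, good m b C x := by
  induction W with
  | nil => intro x hx; simp at hx; subst hx; exact ha
  | cons h p ih =>
      intro x hx
      rw [SimpleGraph.Walk.support_cons] at hx
      rcases List.mem_cons.mp hx with rfl | hx
      · exact ha
      · exact ih (show gadj _ _ ∧ good m b C _ ∧ good m b C _ from h).2.2 x hx

/-- main extraction: a nodup `gadj`-chain staying above level `B` and hitting
every level in `[B, f u]`. -/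
lemma extract {m : ℕ} {b : Bool} {C : ℕ × ℕ → Bool} {u v : ℕ × ℕ}
    (hu : good m b C u) (h : Reach m b C u v)
    (f : ℕ × ℕ → ℕ) (hL : ∀ a c, gadj a c → f a ≤ f c + 1) (B : ℕ)
    (hfu : B < f u) (hfv : f v ≤ B) :
    ∃ M : List (ℕ × ℕ), M.Chain' gadj ∧ M.Nodup ∧
      (∀ x ∈ M, good m b C x ∧ B ≤ f x) ∧
      (∀ ℓ : ℕ, B ≤ ℓ → ℓ ≤ f u → ∃ x ∈ M, f x = ℓ) := by
  obtain ⟨hv, hr⟩ := reach_rtg hu h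
  have hreach : (GG m b C).Reachable u v := (SimpleGraph.reachable_iff_reflTransGen u v).mpr hr
  obtain ⟨W⟩ := hreach
  set P := W.bypass with hP
  have hnd : P.support.Nodup := W.bypass_isPath.support_nodup
  have hch : List.Chain' (GG m b C).Adj P.support := P.isChain_adj_support
  have hgood : ∀ x ∈ P.support, good m b C x := support_good P hu
  have hsup : P.support = u :: P.support.tail := P.support_eq_cons
  have hchain : List.Chain (GG m b C).Adj u P.support.tail := by
    rw [hsup] at hch; exact hch
  have h9 : (u :: P.support.tail).getLast? = some v := by
    rw [← hsup, List.getLast?_eq_getLast P.support_ne_nil, P.getLast_support]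
  have h10 := List.getLast?_eq_getLast (l := u :: P.support.tail) (List.cons_ne_nil _ _)
  rw [h9] at h10
  have hlast : f ((u :: P.support.tail).getLast (List.cons_ne_nil _ _)) ≤ B := by
    rw [← Option.some.inj h10]
    exact hfv
  have hL' : ∀ a c : ℕ × ℕ, (GG m b C).Adj a c → f a ≤ f c + 1 := fun a c hac => hL a c hac.1
  obtain ⟨l', h1, h2, h3, h4⟩ := trunc ((GG m b C).Adj) f hL' B P.support.tail u hchain hfu hlast
  refine ⟨u :: l', ?_, ?_, ?_, ?_⟩
  · exact List.Chain.imp (fun a c hac => hac.1) h1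
  · exact h2.nodup (hsup ▸ hnd)
  · intro x hx
    have hxs : x ∈ P.support := hsup ▸ h2.subset hx
    exact ⟨hgood x hxs, h3 x hx⟩
  · intro ℓ hB hu'
    exact ivt ((GG m b C).Adj) f hL' l' u h1 ℓ (by rw [h4]; exact hB) hu'

/-- embedding of the relevant square region of the big grid into `Fin n × Fin n` -/
def emb (n : ℕ) (hn : 0 < n) (x : ℕ × ℕ) : Fin n × Fin n :=
  (⟨x.1 % n, Nat.mod_lt _ hn⟩, ⟨(x.2 - (n - 1)) % n, Nat.mod_lt _ hn⟩)

def inS (n : ℕ) (x : ℕ × ℕ) : Prop := x.1 < n ∧ n - 1 ≤ x.2 ∧ x.2 < 2 * n - 1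

lemma emb_fst {n : ℕ} (hn : 0 < n) {x : ℕ × ℕ} (hx : inS n x) :
    ((emb n hn x).1 : ℕ) = x.1 := Nat.mod_eq_of_lt hx.1

lemma emb_snd {n : ℕ} (hn : 0 < n) {x : ℕ × ℕ} (hx : inS n x) :
    ((emb n hn x).2 : ℕ) = x.2 - (n - 1) := by
  have : x.2 - (n - 1) < n := by obtain ⟨_, h2, h3⟩ := hx; omega
  exact Nat.mod_eq_of_lt this

lemma emb_inj {n : ℕ} (hn : 0 < n) {x y : ℕ × ℕ} (hx : inS n x) (hy : inS n y)
    (h : emb n hn x = emb n hn y) : x = y := by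
  rw [Prod.ext_iff, Fin.ext_iff, Fin.ext_iff, emb_fst hn hx, emb_fst hn hy,
    emb_snd hn hx, emb_snd hn hy] at h
  obtain ⟨h1, h2⟩ := h
  obtain ⟨hx1, hx2, hx3⟩ := hx
  obtain ⟨hy1, hy2, hy3⟩ := hy
  obtain ⟨x1, x2⟩ := x
  obtain ⟨y1, y2⟩ := y
  simp only [Prod.mk.injEq]
  constructor <;> omega

lemma key {n : ℕ} (hn : 0 < n) {x y : ℕ × ℕ} (hx : inS n x) (hy : inS n y)
    (hadj : gadj x y) : (triGrid n).Adj (emb n hn x) (emb n hn y) := by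
  have hne : emb n hn x ≠ emb n hn y := fun he =>
    gadj_irrefl y (by rwa [emb_inj hn hx hy he] at hadj)
  rw [triGrid, SimpleGraph.fromRel_adj]
  refine ⟨hne, ?_⟩
  have e1 := emb_fst hn hx
  have e2 := emb_snd hn hx
  have e3 := emb_fst hn hy
  have e4 := emb_snd hn hy
  obtain ⟨hx1, hx2, hx3⟩ := hx
  obtain ⟨hy1, hy2, hy3⟩ := hy
  simp only [Fin.ext_iff, e1, e2, e3, e4]
  unfold gadj at hadj
  omega

lemma build (n : ℕ) (hn : 0 < n) (c : Fin n × Fin n → Bool) (b : Bool) (M : List (ℕ × ℕ))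
    (hch : M.Chain' gadj) (hnd : M.Nodup) (hlen : n ≤ M.length)
    (hmem : ∀ x ∈ M, inS n x ∧ c (emb n hn x) = b) :
    ∃ P : Fin n → Fin n × Fin n,
      Function.Injective P ∧
      (∀ i j : Fin n, (i : ℕ) + 1 = (j : ℕ) → (triGrid n).Adj (P i) (P j)) ∧
      (∀ i j : Fin n, c (P i) = c (P j)) := by
  have hget : ∀ i : Fin n, ((i : ℕ)) < M.length := fun i => lt_of_lt_of_le i.2 hlen
  refine ⟨fun i => emb n hn (M.get ⟨i, hget i⟩), ?_, ?_, ?_⟩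
  · intro i j hij
    have hi := (hmem _ (List.get_mem M ⟨_, hget i⟩)).1
    have hj := (hmem _ (List.get_mem M ⟨_, hget j⟩)).1
    have h2 := emb_inj hn hi hj hij
    have h3 := List.nodup_iff_injective_get.mp hnd h2
    exact Fin.ext (by simpa using congrArg Fin.val h3)
  · intro i j hij
    have hi2 : (i : ℕ) + 1 < M.length := by have := hget j; omega
    have hlt : (i : ℕ) < M.length - 1 := by omega
    have hadj := List.isChain_iff_getElem.mp hch i hi2
    have hjj : M.get ⟨(j : ℕ), hget j⟩ = M.get ⟨(i : ℕ) + 1, hi2⟩ := by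
      congr 1
      exact Fin.ext hij.symm
    simp only [hjj]
    exact key hn (hmem _ (List.get_mem M ⟨_, hget i⟩)).1
      (hmem _ (List.get_mem M ⟨_, hi2⟩)).1 hadj
  · intro i j
    have h1 := (hmem _ (List.get_mem M ⟨_, hget i⟩)).2
    have h2 := (hmem _ (List.get_mem M ⟨_, hget j⟩)).2
    simp only []
    rw [h1, h2]

theorem stmt8' (n : ℕ) (c : Fin n × Fin n → Bool) :
    ∃ P : Fin n → Fin n × Fin n,
      Function.Injective P ∧
      (∀ i j : Fin n, (i : ℕ) + 1 = (j : ℕ) → (triGrid n).Adj (P i) (P j)) ∧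
      (∀ i j : Fin n, c (P i) = c (P j)) := by
  rcases n with _ | (_ | m)
  · exact ⟨Fin.elim0, fun i => i.elim0, fun i => i.elim0, fun i => i.elim0⟩
  · refine ⟨fun _ => (0, 0), fun i j _ => Fin.ext (by omega), fun i j h => ?_,
      fun i j => rfl⟩
    have hi := i.2
    have hj := j.2
    omega
  case succ.succ =>
      have hn : 0 < (m + 1 + 1) := by omega
      set C : ℕ × ℕ → Bool := fun x =>
        if (x.1 < (m + 1 + 1) ∧ (m + 1 + 1) - 1 ≤ x.2 ∧ x.2 < 2 * (m + 1 + 1) - 1) then c (emb (m + 1 + 1) hn x)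
        else if x.1 < (m + 1 + 1) then true else false with hC
      have hCS : ∀ x, inS (m + 1 + 1) x → C x = c (emb (m + 1 + 1) hn x) := by
        intro x hx
        simp only [hC]
        rw [if_pos (show x.1 < (m + 1 + 1) ∧ (m + 1 + 1) - 1 ≤ x.2 ∧ x.2 < 2 * (m + 1 + 1) - 1 from hx)]
      have hCtrue : ∀ x, ¬ inS (m + 1 + 1) x → x.1 < (m + 1 + 1) → C x = true := by
        intro x hx h1
        simp only [hC]
        rw [if_neg (show ¬ (x.1 < (m + 1 + 1) ∧ (m + 1 + 1) - 1 ≤ x.2 ∧ x.2 < 2 * (m + 1 + 1) - 1) from hx), if_pos h1]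
      have hCfalse : ∀ x, (m + 1 + 1) ≤ x.1 → C x = false := by
        intro x h1
        have hx : ¬ (x.1 < (m + 1 + 1) ∧ (m + 1 + 1) - 1 ≤ x.2 ∧ x.2 < 2 * (m + 1 + 1) - 1) := by omega
        simp only [hC]
        rw [if_neg hx, if_neg (by omega)]
      obtain ⟨b, p, q, r, hp, hq, hr, hp0, hqt, hrd, hpq, hqr⟩ := ytheorem (2 * (m + 1 + 1) - 2) C
      have hL1 : ∀ a c' : ℕ × ℕ, gadj a c' → a.2 ≤ c'.2 + 1 := by
        intro a c' h; unfold gadj at h; omega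
      have hL2 : ∀ a c' : ℕ × ℕ, gadj a c' → 2 * (m + 1 + 1) - 2 - a.1 ≤ (2 * (m + 1 + 1) - 2 - c'.1) + 1 := by
        intro a c' h; unfold gadj at h; omega
      cases b with
      | true =>
          -- blue crosses vertically: from the top row down to level (m + 1 + 1)-1
          have hr1 : r.1 < (m + 1 + 1) := by
            by_contra h
            have h2 := hr.2
            rw [hCfalse r (by omega)] at h2
            exact absurd h2 (by simp)
          have hfv : r.2 ≤ (m + 1 + 1) - 1 := by omega
          have hfu : (m + 1 + 1) - 1 < q.2 := by omega
          obtain ⟨M, hch, hnd, hmm, hlev⟩ := extract hq hqr Prod.snd hL1 ((m + 1 + 1) - 1) hfu hfv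
          have hmem : ∀ x ∈ M, inS (m + 1 + 1) x ∧ c (emb (m + 1 + 1) hn x) = true := by
            intro x hx
            obtain ⟨⟨hxT, hx3⟩, hx4⟩ := hmm x hx
            have hx1 := hxT.1
            have hx2 := hxT.2
            have hx5 : x.1 < (m + 1 + 1) := by
              by_contra h
              rw [hCfalse x (by omega)] at hx3
              exact absurd hx3 (by simp)
            have hS : inS (m + 1 + 1) x := ⟨hx5, hx4, by omega⟩
            exact ⟨hS, by rw [← hCS x hS]; exact hx3⟩
          have hlen : (m + 1 + 1) ≤ M.length := by
            have hsub : Finset.Icc ((m + 1 + 1) - 1) (2 * (m + 1 + 1) - 2) ⊆ M.toFinset.image Prod.snd := by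
              intro ℓ hℓ
              rw [Finset.mem_Icc] at hℓ
              obtain ⟨x, hx, hfx⟩ := hlev ℓ hℓ.1 (by omega)
              exact Finset.mem_image.mpr ⟨x, List.mem_toFinset.mpr hx, hfx⟩
            calc (m + 1 + 1) = (Finset.Icc ((m + 1 + 1) - 1) (2 * (m + 1 + 1) - 2)).card := by rw [Nat.card_Icc]; omega
              _ ≤ (M.toFinset.image Prod.snd).card := Finset.card_le_card hsub
              _ ≤ M.toFinset.card := Finset.card_image_le
              _ = M.length := List.toFinset_card_of_nodup hnd
          exact build (m + 1 + 1) hn c true M hch hnd hlen hmem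
      | false =>
          -- red crosses horizontally: from the left column to column (m + 1 + 1)-1
          have hpr : Reach (2 * (m + 1 + 1) - 2 + 1) false C p r := hpq.trans hqr
          have hr1 : (m + 1 + 1) - 1 ≤ r.1 := by
            by_contra h
            have hS : ¬ inS (m + 1 + 1) r := fun hS => by have := hS.2.1; omega
            have h2 := hr.2
            rw [hCtrue r hS (by omega)] at h2
            exact absurd h2 (by simp)
          have hfv : 2 * (m + 1 + 1) - 2 - r.1 ≤ (m + 1 + 1) - 1 := by omega
          have hfu : (m + 1 + 1) - 1 < 2 * (m + 1 + 1) - 2 - p.1 := by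
            have := hp0
            omega
          obtain ⟨M, hch, hnd, hmm, hlev⟩ :=
            extract hp hpr (fun x => 2 * (m + 1 + 1) - 2 - x.1) hL2 ((m + 1 + 1) - 1) hfu hfv
          have hmem : ∀ x ∈ M, inS (m + 1 + 1) x ∧ c (emb (m + 1 + 1) hn x) = false := by
            intro x hx
            obtain ⟨⟨hxT, hx3⟩, hx4⟩ := hmm x hx
            have hx1 := hxT.1
            have hx2 := hxT.2
            have hx5 : x.1 < (m + 1 + 1) := by omega
            have hS : inS (m + 1 + 1) x := by
              by_contra h
              rw [hCtrue x h hx5] at hx3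
              exact absurd hx3 (by simp)
            exact ⟨hS, by rw [← hCS x hS]; exact hx3⟩
          have hlen : (m + 1 + 1) ≤ M.length := by
            have hsub : Finset.Icc ((m + 1 + 1) - 1) (2 * (m + 1 + 1) - 2) ⊆
                M.toFinset.image (fun x => 2 * (m + 1 + 1) - 2 - x.1) := by
              intro ℓ hℓ
              rw [Finset.mem_Icc] at hℓ
              obtain ⟨x, hx, hfx⟩ := hlev ℓ hℓ.1 (by rw [hp0]; omega)
              exact Finset.mem_image.mpr ⟨x, List.mem_toFinset.mpr hx, hfx⟩
            calc (m + 1 + 1) = (Finset.Icc ((m + 1 + 1) - 1) (2 * (m + 1 + 1) - 2)).card := by rw [Nat.card_Icc]; omega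
              _ ≤ (M.toFinset.image (fun x => 2 * (m + 1 + 1) - 2 - x.1)).card := Finset.card_le_card hsub
              _ ≤ M.toFinset.card := Finset.card_image_le
              _ = M.length := List.toFinset_card_of_nodup hnd
          exact build (m + 1 + 1) hn c false M hch hnd hlen hmem

end Hex8

/-- Hex Lemma: every 2-colouring of the vertices of the triangulated grid
`H_n` admits a monochromatic path on `n` vertices. -/
theorem stmt8 (n : ℕ) (c : Fin n × Fin n → Bool) :
    ∃ P : Fin n → Fin n × Fin n,
      Function.Injective P ∧
      (∀ i j : Fin n, (i : ℕ) + 1 = (j : ℕ) → (triGrid n).Adj (P i) (P j)) ∧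
      (∀ i j : Fin n, c (P i) = c (P j)) := by
  exact Hex8.stmt8' n c
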